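/- The good colorings of A ⊔ B with k green elements (|A|=a, |B|=b) are in bijection with the k-element faces of the simplicial complex Δ defined on vertices {x_{i,j}} ∪ {y_{i,j}} with the minimal non-faces {x_{i,j},x_{i',j'}} (i≤i', j≥j'), {y_{i,j},y_{i',j'}} (i≤i', j≥j'), {x_{i,j},y_{i',j}}, {x_{i,j},y_{i,j'}}. Consequently, the number of k-element faces of Δ is C(2k,k)·C(a,k)·C(b,k). -/

import Mathlib

open Finset

/-- Vertices of the complex `Δ`: `Sum.inl (i,j)` is `x_{i,j}`, `Sum.inr (i,j)` is `y_{i,j}`. -/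
abbrev DeltaVertex (a b : ℕ) := (Fin a × Fin b) ⊕ (Fin a × Fin b)

/-- `F` is a face of `Δ`: it contains none of the minimal non-faces
`{x_{i,j}, x_{i',j'}}` with `i ≤ i'`, `j ≥ j'`; `{y_{i,j}, y_{i',j'}}` with `i ≤ i'`, `j ≥ j'`;
`{x_{i,j}, y_{i',j}}`; `{x_{i,j}, y_{i,j'}}`. -/
def IsFaceDelta {a b : ℕ} (F : Finset (DeltaVertex a b)) : Prop :=
  (∀ p q : Fin a × Fin b, Sum.inl p ∈ F → Sum.inl q ∈ F → p ≠ q →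
      ¬(p.1 ≤ q.1 ∧ q.2 ≤ p.2)) ∧
  (∀ p q : Fin a × Fin b, Sum.inr p ∈ F → Sum.inr q ∈ F → p ≠ q →
      ¬(p.1 ≤ q.1 ∧ q.2 ≤ p.2)) ∧
  (∀ p q : Fin a × Fin b, Sum.inl p ∈ F → Sum.inr q ∈ F → p.1 ≠ q.1 ∧ p.2 ≠ q.2)

/-- Partial colors: red, green, or uncolored. -/
inductive Col3
  | R | G | U
deriving DecidableEq

instance : Fintype Col3 :=
  ⟨{Col3.R, Col3.G, Col3.U}, fun x => by cases x <;> simp⟩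

/-- A partial coloring of `Fin a ⊕ Fin b` is good if the number of green elements of `A`
equals the number of red elements of `B` and the number of green elements of `B` equals
the number of red elements of `A`. -/
def IsGood3 {a b : ℕ} (c : Fin a ⊕ Fin b → Col3) : Prop :=
  (Finset.univ.filter (fun x : Fin a => c (Sum.inl x) = Col3.G)).card
      = (Finset.univ.filter (fun y : Fin b => c (Sum.inr y) = Col3.R)).card ∧
  (Finset.univ.filter (fun y : Fin b => c (Sum.inr y) = Col3.G)).card
      = (Finset.univ.filter (fun x : Fin a => c (Sum.inl x) = Col3.R)).card

/-- Number of green elements of a partial coloring. -/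
def greens {a b : ℕ} (c : Fin a ⊕ Fin b → Col3) : ℕ :=
  (Finset.univ.filter (fun z : Fin a ⊕ Fin b => c z = Col3.G)).card

namespace Stmt13Aux

variable {α β : Type*} [LinearOrder α] [LinearOrder β] [DecidableEq α] [DecidableEq β]

/-- The chain condition on a finset of pairs. -/
def ChainCond (S : Finset (α × β)) : Prop :=
  ∀ p ∈ S, ∀ q ∈ S, p ≠ q → ¬(p.1 ≤ q.1 ∧ q.2 ≤ p.2)

theorem ChainCond.fst_injOn {S : Finset (α × β)} (h : ChainCond S) :
    Set.InjOn Prod.fst (S : Set (α × β)) := by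
  intro p hp q hq hpq
  by_contra hne
  have h1 : ¬ q.2 ≤ p.2 := fun hle => h p hp q hq hne ⟨le_of_eq hpq, hle⟩
  have h2 : ¬ p.2 ≤ q.2 := fun hle => h q hq p hp (Ne.symm hne) ⟨le_of_eq hpq.symm, hle⟩
  exact h2 (le_of_not_ge h1)

theorem ChainCond.snd_injOn {S : Finset (α × β)} (h : ChainCond S) :
    Set.InjOn Prod.snd (S : Set (α × β)) := by
  intro p hp q hq hpq
  by_contra hne
  rcases le_total p.1 q.1 with hle | hle
  · exact h p hp q hq hne ⟨hle, le_of_eq hpq.symm⟩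
  · exact h q hq p hp (Ne.symm hne) ⟨hle, le_of_eq hpq⟩

theorem ChainCond.lt_iff {S : Finset (α × β)} (h : ChainCond S) {p q : α × β}
    (hp : p ∈ S) (hq : q ∈ S) : p.1 < q.1 ↔ p.2 < q.2 := by
  constructor
  · intro hlt
    have hne : p ≠ q := fun e => absurd (congrArg Prod.fst e) hlt.ne
    have := h p hp q hq hne
    by_contra hc
    exact this ⟨hlt.le, le_of_not_gt hc⟩
  · intro hlt
    have hne : p ≠ q := fun e => absurd (congrArg Prod.snd e) hlt.ne
    by_contra hc
    exact h q hq p hp (Ne.symm hne) ⟨le_of_not_gt hc, hlt.le⟩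

theorem image_orderIsoOfFin (I : Finset α) {s : ℕ} (h : I.card = s) :
    (univ : Finset (Fin s)).image (fun m => (I.orderIsoOfFin h m : α)) = I := by
  ext x
  simp only [mem_image, mem_univ, true_and]
  constructor
  · rintro ⟨m, rfl⟩; exact (I.orderIsoOfFin h m).2
  · intro hx
    exact ⟨(I.orderIsoOfFin h).symm ⟨x, hx⟩, by simp⟩

theorem rank_orderIsoOfFin (I : Finset α) {s : ℕ} (h : I.card = s) (m : Fin s) :
    (I.filter (· < (I.orderIsoOfFin h m : α))).card = (m : ℕ) := by
  have he : I.filter (· < (I.orderIsoOfFin h m : α))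
      = (univ.filter (· < m)).image (fun m' => (I.orderIsoOfFin h m' : α)) := by
    ext x
    simp only [mem_filter, mem_image, mem_univ, true_and]
    constructor
    · rintro ⟨hxI, hlt⟩
      refine ⟨(I.orderIsoOfFin h).symm ⟨x, hxI⟩, ?_, by simp⟩
      have : I.orderIsoOfFin h ((I.orderIsoOfFin h).symm ⟨x, hxI⟩) < I.orderIsoOfFin h m := by
        rw [OrderIso.apply_symm_apply]; exact Subtype.coe_lt_coe.mp hlt
      exact (OrderIso.lt_iff_lt _).mp this
    · rintro ⟨m', hm', rfl⟩
      refine ⟨(I.orderIsoOfFin h m').2, ?_⟩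
      exact Subtype.coe_lt_coe.mpr ((OrderIso.lt_iff_lt _).mpr hm')
  rw [he, card_image_of_injOn (Set.injOn_of_injective
    (fun m1 m2 hmm => (I.orderIsoOfFin h).injective (Subtype.coe_injective hmm)))]
  have : (univ : Finset (Fin s)).filter (· < m) = Finset.Iio m := by
    ext x; simp
  rw [this, Fin.card_Iio]

theorem rank_eq {S : Finset (α × β)} (h : ChainCond S) {p : α × β} (hp : p ∈ S) :
    ((S.image Prod.fst).filter (· < p.1)).card = ((S.image Prod.snd).filter (· < p.2)).card := by
  rw [filter_image, filter_image]
  have hsub : ∀ (P : α × β → Prop) [DecidablePred P], ((S.filter P : Finset (α × β)) : Set (α × β)) ⊆ (S : Set (α × β)) := by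
    intro P _ x hx
    simp only [coe_filter, Set.mem_setOf_eq] at hx
    exact hx.1
  rw [card_image_of_injOn (h.fst_injOn.mono (hsub _))]
  rw [card_image_of_injOn (h.snd_injOn.mono (hsub _))]
  congr 1
  exact filter_congr fun q hq => by simpa using h.lt_iff hq hp

/-- The graph of the order isomorphism between `I` and `J`. -/
noncomputable def graphF (I : Finset α) (J : Finset β) (h : J.card = I.card) :
    Finset (α × β) :=
  (univ : Finset (Fin I.card)).image fun m =>
    ((I.orderIsoOfFin rfl m : α), (J.orderIsoOfFin h m : β))

theorem graphF_chain (I : Finset α) (J : Finset β) (h : J.card = I.card) :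
    ChainCond (graphF I J h) := by
  rintro p hp q hq hne ⟨h1, h2⟩
  simp only [graphF, mem_image, mem_univ, true_and] at hp hq
  obtain ⟨m, rfl⟩ := hp
  obtain ⟨n, rfl⟩ := hq
  have hmn : m ≤ n := by
    have := Subtype.coe_le_coe.mp h1
    exact (OrderIso.le_iff_le _).mp this
  have hnm : n ≤ m := by
    have := Subtype.coe_le_coe.mp h2
    exact (OrderIso.le_iff_le _).mp this
  exact hne (by rw [le_antisymm hmn hnm])

theorem graphF_image_fst (I : Finset α) (J : Finset β) (h : J.card = I.card) :
    (graphF I J h).image Prod.fst = I := by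
  rw [graphF, image_image]
  exact image_orderIsoOfFin I rfl

theorem graphF_image_snd (I : Finset α) (J : Finset β) (h : J.card = I.card) :
    (graphF I J h).image Prod.snd = J := by
  rw [graphF, image_image]
  exact image_orderIsoOfFin J h

theorem graphF_card (I : Finset α) (J : Finset β) (h : J.card = I.card) :
    (graphF I J h).card = I.card := by
  rw [graphF, card_image_of_injective, card_univ, Fintype.card_fin]
  intro m n hmn
  have := congrArg Prod.fst hmn
  simpa using (I.orderIsoOfFin rfl).injective (Subtype.coe_injective this)

theorem graphF_fst_mem {I : Finset α} {J : Finset β} {h : J.card = I.card}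
    {p : α × β} (hp : p ∈ graphF I J h) : p.1 ∈ I := by
  simp only [graphF, mem_image, mem_univ, true_and] at hp
  obtain ⟨m, rfl⟩ := hp
  exact (I.orderIsoOfFin rfl m).2

theorem graphF_snd_mem {I : Finset α} {J : Finset β} {h : J.card = I.card}
    {p : α × β} (hp : p ∈ graphF I J h) : p.2 ∈ J := by
  simp only [graphF, mem_image, mem_univ, true_and] at hp
  obtain ⟨m, rfl⟩ := hp
  exact (J.orderIsoOfFin h m).2

theorem card_image_fst {S : Finset (α × β)} (h : ChainCond S) :
    (S.image Prod.fst).card = S.card := card_image_of_injOn h.fst_injOn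

theorem card_image_snd {S : Finset (α × β)} (h : ChainCond S) :
    (S.image Prod.snd).card = S.card := card_image_of_injOn h.snd_injOn

theorem chain_eq_graphF {S : Finset (α × β)} (hS : ChainCond S) :
    graphF (S.image Prod.fst) (S.image Prod.snd)
      ((card_image_snd hS).trans (card_image_fst hS).symm) = S := by
  set I := S.image Prod.fst with hI
  set J := S.image Prod.snd with hJ
  have hc : J.card = I.card := (card_image_snd hS).trans (card_image_fst hS).symm
  refine (eq_of_subset_of_card_le ?_ ?_).symm
  · -- S ⊆ graphF
    intro p hp
    have hp1 : p.1 ∈ I := mem_image_of_mem _ hp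
    have hp2 : p.2 ∈ J := mem_image_of_mem _ hp
    set m := (I.orderIsoOfFin rfl).symm ⟨p.1, hp1⟩ with hm
    set n := (J.orderIsoOfFin hc).symm ⟨p.2, hp2⟩ with hn
    have e1 : (I.orderIsoOfFin rfl m : α) = p.1 := by simp [hm]
    have e2 : (J.orderIsoOfFin hc n : β) = p.2 := by simp [hn]
    have hmn : (m : ℕ) = (n : ℕ) := by
      have r1 := rank_orderIsoOfFin I rfl m
      have r2 := rank_orderIsoOfFin J hc n
      rw [e1] at r1; rw [e2] at r2
      rw [← r1, ← r2]
      exact rank_eq hS hp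
    have hmn' : m = n := Fin.ext hmn
    simp only [graphF, mem_image, mem_univ, true_and]
    exact ⟨m, by rw [← hmn'] at e2; exact Prod.ext e1 e2⟩
  · rw [graphF_card, card_image_fst hS]

variable {α : Type*} [LinearOrder α] [DecidableEq α]

/-- Subset of `S` indexed by a subset of `Fin k`. -/
noncomputable def idx (S : Finset α) {k : ℕ} (h : S.card = k) (U : Finset (Fin k)) : Finset α :=
  U.image fun m => (S.orderIsoOfFin h m : α)

noncomputable def unidx (S : Finset α) {k : ℕ} (h : S.card = k) (T : Finset α) : Finset (Fin k) :=
  univ.filter fun m => (S.orderIsoOfFin h m : α) ∈ T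

theorem idx_subset (S : Finset α) {k : ℕ} (h : S.card = k) (U : Finset (Fin k)) :
    idx S h U ⊆ S := by
  intro x hx
  simp only [idx, mem_image] at hx
  obtain ⟨m, _, rfl⟩ := hx
  exact (S.orderIsoOfFin h m).2

theorem card_idx (S : Finset α) {k : ℕ} (h : S.card = k) (U : Finset (Fin k)) :
    (idx S h U).card = U.card :=
  card_image_of_injOn (Set.injOn_of_injective
    (fun m1 m2 hmm => (S.orderIsoOfFin h).injective (Subtype.coe_injective hmm)))

theorem unidx_idx (S : Finset α) {k : ℕ} (h : S.card = k) (U : Finset (Fin k)) :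
    unidx S h (idx S h U) = U := by
  ext m
  simp only [unidx, idx, mem_filter, mem_univ, true_and, mem_image]
  constructor
  · rintro ⟨m', hm', he⟩
    rwa [← (S.orderIsoOfFin h).injective (Subtype.coe_injective he)]
  · intro hm; exact ⟨m, hm, rfl⟩

theorem idx_unidx (S : Finset α) {k : ℕ} (h : S.card = k) {T : Finset α} (hT : T ⊆ S) :
    idx S h (unidx S h T) = T := by
  ext x
  simp only [idx, unidx, mem_image, mem_filter, mem_univ, true_and]
  constructor
  · rintro ⟨m, hm, rfl⟩; exact hm
  · intro hx
    exact ⟨(S.orderIsoOfFin h).symm ⟨x, hT hx⟩, by simpa using hx, by simp⟩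

theorem card_unidx (S : Finset α) {k : ℕ} (h : S.card = k) {T : Finset α} (hT : T ⊆ S) :
    (unidx S h T).card = T.card := by
  conv_rhs => rw [← idx_unidx S h hT]
  rw [card_idx]

theorem idx_congr {S S' : Finset α} (hSS : S = S') {k : ℕ} (h : S.card = k) (h' : S'.card = k)
    (U : Finset (Fin k)) : idx S h U = idx S' h' U := by subst hSS; rfl

theorem unidx_congr {S S' : Finset α} (hSS : S = S') {k : ℕ} (h : S.card = k) (h' : S'.card = k)
    (T : Finset α) : unidx S h T = unidx S' h' T := by subst hSS; rfl

/-! ### Coloring data -/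

abbrev ColorData (a b k : ℕ) :=
  {d : Finset (Fin a) × Finset (Fin a) × Finset (Fin b) × Finset (Fin b) //
    Disjoint d.1 d.2.1 ∧ Disjoint d.2.2.1 d.2.2.2 ∧
    d.1.card = d.2.2.2.card ∧ d.2.2.1.card = d.2.1.card ∧ d.1.card + d.2.2.1.card = k}

abbrev Triple (a b k : ℕ) :=
  {s : Finset (Fin a) // s.card = k} × {s : Finset (Fin b) // s.card = k} ×
    {W : Finset (Fin k ⊕ Fin k) // W.card = k}

theorem toLeft_filter {a b : ℕ} (P : Fin a ⊕ Fin b → Prop) [DecidablePred P] :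
    (univ.filter P).toLeft = univ.filter (fun i => P (Sum.inl i)) := by
  ext i; simp

theorem toRight_filter {a b : ℕ} (P : Fin a ⊕ Fin b → Prop) [DecidablePred P] :
    (univ.filter P).toRight = univ.filter (fun j => P (Sum.inr j)) := by
  ext j; simp

theorem card_filter_sum {a b : ℕ} (P : Fin a ⊕ Fin b → Prop) [DecidablePred P] :
    (univ.filter P).card
      = (univ.filter (fun i => P (Sum.inl i))).card + (univ.filter (fun j => P (Sum.inr j))).card := by
  rw [← card_toLeft_add_card_toRight, toLeft_filter, toRight_filter]

/-! ### Colorings vs ColorData -/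

def mkCol {a b : ℕ} (GA RA : Finset (Fin a)) (GB RB : Finset (Fin b)) : Fin a ⊕ Fin b → Col3
  | Sum.inl i => if i ∈ GA then Col3.G else if i ∈ RA then Col3.R else Col3.U
  | Sum.inr j => if j ∈ GB then Col3.G else if j ∈ RB then Col3.R else Col3.U

theorem filter_mkCol_G_left {a b : ℕ} (GA RA : Finset (Fin a)) (GB RB : Finset (Fin b)) :
    univ.filter (fun i => mkCol GA RA GB RB (Sum.inl i) = Col3.G) = GA := by
  ext i
  by_cases h1 : i ∈ GA
  · simp [mkCol, h1]
  · by_cases h2 : i ∈ RA <;> simp [mkCol, h1, h2]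

theorem filter_mkCol_R_left {a b : ℕ} {GA RA : Finset (Fin a)} (GB RB : Finset (Fin b))
    (hdis : Disjoint GA RA) :
    univ.filter (fun i => mkCol GA RA GB RB (Sum.inl i) = Col3.R) = RA := by
  ext i
  simp only [mem_filter, mem_univ, true_and]
  by_cases h1 : i ∈ GA
  · have h2 : i ∉ RA := disjoint_left.mp hdis h1
    simp [mkCol, h1, h2]
  · by_cases h2 : i ∈ RA <;> simp [mkCol, h1, h2]

theorem filter_mkCol_G_right {a b : ℕ} (GA RA : Finset (Fin a)) (GB RB : Finset (Fin b)) :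
    univ.filter (fun j => mkCol GA RA GB RB (Sum.inr j) = Col3.G) = GB := by
  ext j
  by_cases h1 : j ∈ GB
  · simp [mkCol, h1]
  · by_cases h2 : j ∈ RB <;> simp [mkCol, h1, h2]

theorem filter_mkCol_R_right {a b : ℕ} (GA RA : Finset (Fin a)) {GB RB : Finset (Fin b)}
    (hdis : Disjoint GB RB) :
    univ.filter (fun j => mkCol GA RA GB RB (Sum.inr j) = Col3.R) = RB := by
  ext j
  simp only [mem_filter, mem_univ, true_and]
  by_cases h1 : j ∈ GB
  · have h2 : j ∉ RB := disjoint_left.mp hdis h1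
    simp [mkCol, h1, h2]
  · by_cases h2 : j ∈ RB <;> simp [mkCol, h1, h2]

theorem greens_eq {a b : ℕ} (c : Fin a ⊕ Fin b → Col3) :
    greens c = (univ.filter (fun i => c (Sum.inl i) = Col3.G)).card
      + (univ.filter (fun j => c (Sum.inr j) = Col3.G)).card :=
  card_filter_sum _

def equivColor (a b k : ℕ) :
    {c : Fin a ⊕ Fin b → Col3 // IsGood3 c ∧ greens c = k} ≃ ColorData a b k where
  toFun c := ⟨(univ.filter (fun i => c.1 (Sum.inl i) = Col3.G),
               univ.filter (fun i => c.1 (Sum.inl i) = Col3.R),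
               univ.filter (fun j => c.1 (Sum.inr j) = Col3.G),
               univ.filter (fun j => c.1 (Sum.inr j) = Col3.R)), by
    refine ⟨?_, ?_, c.2.1.1, c.2.1.2, ?_⟩
    · simp only [disjoint_left, mem_filter, mem_univ, true_and]
      intro i hG hR
      rw [hG] at hR; exact Col3.noConfusion hR
    · simp only [disjoint_left, mem_filter, mem_univ, true_and]
      intro j hG hR
      rw [hG] at hR; exact Col3.noConfusion hR
    · rw [← greens_eq]; exact c.2.2⟩
  invFun d := ⟨mkCol d.1.1 d.1.2.1 d.1.2.2.1 d.1.2.2.2, by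
    obtain ⟨⟨GA, RA, GB, RB⟩, h1, h2, h3, h4, h5⟩ := d
    refine ⟨⟨?_, ?_⟩, ?_⟩
    · rw [filter_mkCol_G_left, filter_mkCol_R_right _ _ h2]; exact h3
    · rw [filter_mkCol_G_right, filter_mkCol_R_left _ _ h1]; exact h4
    · rw [greens_eq, filter_mkCol_G_left, filter_mkCol_G_right]; exact h5⟩
  left_inv c := by
    apply Subtype.ext
    funext z
    rcases z with i | j
    · rcases h : c.1 (Sum.inl i) <;> simp [mkCol, h]
    · rcases h : c.1 (Sum.inr j) <;> simp [mkCol, h]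
  right_inv d := by
    obtain ⟨⟨GA, RA, GB, RB⟩, h1, h2, h3, h4, h5⟩ := d
    apply Subtype.ext
    simp only
    rw [filter_mkCol_G_left, filter_mkCol_R_left _ _ h1,
      filter_mkCol_G_right, filter_mkCol_R_right _ _ h2]

/-! ### Faces vs ColorData -/

theorem chainL {a b : ℕ} {F : Finset (DeltaVertex a b)}
    (hF : IsFaceDelta F) : ChainCond F.toLeft := fun p hp q hq =>
  hF.1 p q (mem_toLeft.mp hp) (mem_toLeft.mp hq)

theorem chainR {a b : ℕ} {F : Finset (DeltaVertex a b)}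
    (hF : IsFaceDelta F) : ChainCond F.toRight := fun p hp q hq =>
  hF.2.1 p q (mem_toRight.mp hp) (mem_toRight.mp hq)

noncomputable def equivFace (a b k : ℕ) :
    {F : Finset (DeltaVertex a b) // IsFaceDelta F ∧ F.card = k} ≃ ColorData a b k where
  toFun F := ⟨(F.1.toLeft.image Prod.fst, F.1.toRight.image Prod.fst,
               F.1.toRight.image Prod.snd, F.1.toLeft.image Prod.snd), by
    obtain ⟨F, hF, hk⟩ := F
    dsimp only
    refine ⟨?_, ?_, ?_, ?_, ?_⟩
    · simp only [disjoint_left, mem_image]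
      rintro i ⟨p, hp, rfl⟩ ⟨q, hq, hpq⟩
      exact (hF.2.2 p q (mem_toLeft.mp hp) (mem_toRight.mp hq)).1 hpq.symm
    · simp only [disjoint_left, mem_image]
      rintro j ⟨q, hq, rfl⟩ ⟨p, hp, hpq⟩
      exact (hF.2.2 p q (mem_toLeft.mp hp) (mem_toRight.mp hq)).2 hpq
    · rw [card_image_fst (chainL hF), card_image_snd (chainL hF)]
    · rw [card_image_fst (chainR hF), card_image_snd (chainR hF)]
    · rw [card_image_fst (chainL hF), card_image_snd (chainR hF),
        card_toLeft_add_card_toRight, hk]⟩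
  invFun d := ⟨(graphF d.1.1 d.1.2.2.2 d.2.2.2.1.symm).disjSum
                 (graphF d.1.2.1 d.1.2.2.1 d.2.2.2.2.1), by
    obtain ⟨⟨GA, RA, GB, RB⟩, h1, h2, h3, h4, h5⟩ := d
    simp only at *
    constructor
    · refine ⟨?_, ?_, ?_⟩
      · intro p q hp hq
        rw [inl_mem_disjSum] at hp hq
        exact graphF_chain _ _ _ p hp q hq
      · intro p q hp hq
        rw [inr_mem_disjSum] at hp hq
        exact graphF_chain _ _ _ p hp q hq
      · intro p q hp hq
        rw [inl_mem_disjSum] at hp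
        rw [inr_mem_disjSum] at hq
        have hp1 : p.1 ∈ GA := graphF_fst_mem hp
        have hp2 : p.2 ∈ RB := graphF_snd_mem hp
        have hq1 : q.1 ∈ RA := graphF_fst_mem hq
        have hq2 : q.2 ∈ GB := graphF_snd_mem hq
        exact ⟨fun e => disjoint_left.mp h1 hp1 (e ▸ hq1),
               fun e => disjoint_left.mp h2 hq2 (e ▸ hp2)⟩
    · rw [card_disjSum, graphF_card, graphF_card, ← h4, h5]⟩
  left_inv F := by
    obtain ⟨F, hF, hk⟩ := F
    apply Subtype.ext
    dsimp only
    rw [chain_eq_graphF (chainL hF), chain_eq_graphF (chainR hF),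
      toLeft_disjSum_toRight]
  right_inv d := by
    obtain ⟨⟨GA, RA, GB, RB⟩, h1, h2, h3, h4, h5⟩ := d
    apply Subtype.ext
    simp only [toLeft_disjSum, toRight_disjSum]
    rw [graphF_image_fst, graphF_image_snd, graphF_image_fst, graphF_image_snd]

/-! ### ColorData vs Triple -/

theorem cardA {a b k : ℕ} (d : ColorData a b k) : (d.1.1 ∪ d.1.2.1).card = k := by
  obtain ⟨⟨GA, RA, GB, RB⟩, h1, h2, h3, h4, h5⟩ := d
  dsimp only at *
  rw [card_union_of_disjoint h1]
  omega

theorem cardB {a b k : ℕ} (d : ColorData a b k) : (d.1.2.2.1 ∪ d.1.2.2.2).card = k := by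
  obtain ⟨⟨GA, RA, GB, RB⟩, h1, h2, h3, h4, h5⟩ := d
  dsimp only at *
  rw [card_union_of_disjoint h2]
  omega

noncomputable def dataToTriple {a b k : ℕ} (d : ColorData a b k) : Triple a b k :=
  ⟨⟨d.1.1 ∪ d.1.2.1, cardA d⟩, ⟨d.1.2.2.1 ∪ d.1.2.2.2, cardB d⟩,
   ⟨(unidx _ (cardA d) d.1.1).disjSum ((unidx _ (cardB d) d.1.2.2.2)ᶜ), by
      have hA := cardA d; have hB := cardB d
      obtain ⟨⟨GA, RA, GB, RB⟩, h1, h2, h3, h4, h5⟩ := d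
      dsimp only at *
      rw [card_disjSum, card_compl, Fintype.card_fin,
        card_unidx _ hA subset_union_left, card_unidx _ hB subset_union_right]
      have h3' : GA.card = RB.card := h3
      have h5' : GA.card + GB.card = k := h5
      omega⟩⟩

noncomputable def tripleToData {a b k : ℕ} (t : Triple a b k) : ColorData a b k :=
  ⟨(idx t.1.1 t.1.2 t.2.2.1.toLeft,
    t.1.1 \ idx t.1.1 t.1.2 t.2.2.1.toLeft,
    t.2.1.1 \ idx t.2.1.1 t.2.1.2 t.2.2.1.toRightᶜ,
    idx t.2.1.1 t.2.1.2 t.2.2.1.toRightᶜ), by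
    obtain ⟨⟨SA, hSA⟩, ⟨SB, hSB⟩, ⟨W, hW⟩⟩ := t
    dsimp only
    have hLR : W.toLeft.card + W.toRight.card = k := by
      rw [card_toLeft_add_card_toRight, hW]
    have c1 : (idx SA hSA W.toLeft).card = W.toLeft.card := card_idx _ _ _
    have c2 : (idx SB hSB W.toRightᶜ).card = k - W.toRight.card := by
      rw [card_idx, card_compl, Fintype.card_fin]
    have s1 : idx SA hSA W.toLeft ⊆ SA := idx_subset _ _ _
    have s2 : idx SB hSB W.toRightᶜ ⊆ SB := idx_subset _ _ _
    have c3 : (SA \ idx SA hSA W.toLeft).card = k - W.toLeft.card := by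
      rw [card_sdiff_of_subset s1, c1, hSA]
    have c4 : (SB \ idx SB hSB W.toRightᶜ).card = W.toRight.card := by
      rw [card_sdiff_of_subset s2, c2, hSB]
      omega
    exact ⟨disjoint_sdiff, disjoint_sdiff.symm, by omega, by omega, by omega⟩⟩

noncomputable def equivTriple (a b k : ℕ) : ColorData a b k ≃ Triple a b k where
  toFun := dataToTriple
  invFun := tripleToData
  left_inv d := by
    have hA := cardA d; have hB := cardB d
    obtain ⟨⟨GA, RA, GB, RB⟩, h1, h2, h3, h4, h5⟩ := d
    dsimp only at *
    apply Subtype.ext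
    dsimp only [tripleToData, dataToTriple]
    rw [toLeft_disjSum, toRight_disjSum, compl_compl,
      idx_unidx _ hA subset_union_left, idx_unidx _ hB subset_union_right,
      union_sdiff_cancel_left h1, union_sdiff_cancel_right h2]
  right_inv t := by
    obtain ⟨⟨SA, hSA⟩, ⟨SB, hSB⟩, ⟨W, hW⟩⟩ := t
    have hLR : W.toLeft.card + W.toRight.card = k := by
      rw [card_toLeft_add_card_toRight, hW]
    have s1 : idx SA hSA W.toLeft ⊆ SA := idx_subset _ _ _
    have s2 : idx SB hSB W.toRightᶜ ⊆ SB := idx_subset _ _ _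
    have eSA : idx SA hSA W.toLeft ∪ (SA \ idx SA hSA W.toLeft) = SA :=
      union_sdiff_of_subset s1
    have eSB : (SB \ idx SB hSB W.toRightᶜ) ∪ idx SB hSB W.toRightᶜ = SB :=
      sdiff_union_of_subset s2
    dsimp only [dataToTriple, tripleToData]
    refine Prod.ext (Subtype.ext ?_) (Prod.ext (Subtype.ext ?_) (Subtype.ext ?_))
    · exact eSA
    · exact eSB
    · dsimp only
      rw [unidx_congr eSA _ hSA, unidx_congr eSB _ hSB,
        unidx_idx, unidx_idx, compl_compl, toLeft_disjSum_toRight]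

end Stmt13Aux

theorem stmt_13 (a b : ℕ) (k : ℕ) :
    Nonempty
        ({c : Fin a ⊕ Fin b → Col3 // IsGood3 c ∧ greens c = k} ≃
          {F : Finset (DeltaVertex a b) // IsFaceDelta F ∧ F.card = k}) ∧
      {F : Finset (DeltaVertex a b) | IsFaceDelta F ∧ F.card = k}.ncard
        = (2 * k).choose k * a.choose k * b.choose k := by
  constructor
  · exact ⟨(Stmt13Aux.equivColor a b k).trans (Stmt13Aux.equivFace a b k).symm⟩
  · have e : {F : Finset (DeltaVertex a b) // IsFaceDelta F ∧ F.card = k} ≃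
        Stmt13Aux.Triple a b k :=
      (Stmt13Aux.equivFace a b k).trans (Stmt13Aux.equivTriple a b k)
    have h1 : {F : Finset (DeltaVertex a b) | IsFaceDelta F ∧ F.card = k}.ncard
        = Nat.card (Stmt13Aux.Triple a b k) := by
      rw [← Nat.card_coe_set_eq]
      exact Nat.card_congr ((Equiv.subtypeEquivRight (fun F => Iff.rfl)).trans e)
    rw [h1, Nat.card_eq_fintype_card, Fintype.card_prod, Fintype.card_prod,
      Fintype.card_finset_len, Fintype.card_finset_len, Fintype.card_finset_len,
      Fintype.card_fin, Fintype.card_fin, Fintype.card_sum, Fintype.card_fin]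
    rw [two_mul]
    ring
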